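/- Let a be a real number with a ≠ 1/2, let n be a natural number, let π be a probability vector on {0,1}^n, and write C = C_a(n). Then Tr( C⁻¹ · diag(Cπ) · (C⁻¹)ᵀ ) = ((a² + (1−a)²)/(2a−1)²)^n. -/

import Mathlib

open Matrix

/-- `Cmat a b n` is the `2^n × 2^n` real matrix indexed by bit strings `x, y ∈ {0,1}^n`
whose `(x, y)` entry is `a ^ (n - d) * b ^ d`, where `d` is the Hamming distance
between `x` and `y`. -/
def Cmat (a b : ℝ) (n : ℕ) : Matrix (Fin n → Fin 2) (Fin n → Fin 2) ℝ :=
  Matrix.of fun x y => a ^ (n - hammingDist x y) * b ^ hammingDist x y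

/-- `CmatB a n` abbreviates `Cmat a (1 - a) n`. -/
def CmatB (a : ℝ) (n : ℕ) : Matrix (Fin n → Fin 2) (Fin n → Fin 2) ℝ :=
  Cmat a (1 - a) n

lemma key2 (a b c d : ℝ) (u v : Fin 2) :
    ∑ t : Fin 2, (if u = t then a else b) * (if t = v then c else d) =
      if u = v then a * c + b * d else a * d + b * c := by
  fin_cases u <;> fin_cases v <;> simp [Fin.sum_univ_two] <;> ring

lemma key1 (a b : ℝ) (v : Fin 2) :
    ∑ t : Fin 2, (if t = v then a else b) = a + b := by
  fin_cases v <;> simp [Fin.sum_univ_two] <;> ring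

lemma Cmat_apply_prod (a b : ℝ) (n : ℕ) (x y : Fin n → Fin 2) :
    Cmat a b n x y = ∏ i, if x i = y i then a else b := by
  have hd : hammingDist x y = (Finset.univ.filter fun i => ¬ x i = y i).card := rfl
  have h := Finset.card_filter_add_card_filter_not
    (s := (Finset.univ : Finset (Fin n))) (p := fun i => x i = y i)
  simp only [Finset.card_univ, Fintype.card_fin] at h
  have he : (Finset.univ.filter fun i => x i = y i).card = n - hammingDist x y := by omega
  rw [Cmat, Finset.prod_ite, Finset.prod_const, Finset.prod_const, Matrix.of_apply, he, hd]

lemma Cmat_mul (a b c d : ℝ) (n : ℕ) :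
    Cmat a b n * Cmat c d n = Cmat (a * c + b * d) (a * d + b * c) n := by
  ext x z
  rw [Matrix.mul_apply]
  simp only [Cmat_apply_prod]
  calc ∑ y : Fin n → Fin 2, (∏ i, if x i = y i then a else b) * ∏ i, (if y i = z i then c else d)
      = ∑ y : Fin n → Fin 2, ∏ i, ((if x i = y i then a else b) * (if y i = z i then c else d)) := by
        exact Finset.sum_congr rfl fun y _ => Finset.prod_mul_distrib.symm
    _ = ∏ i, ∑ t : Fin 2, ((if x i = t then a else b) * (if t = z i then c else d)) := by
        rw [Fintype.prod_sum]
    _ = ∏ i, if x i = z i then a * c + b * d else a * d + b * c := by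
        exact Finset.prod_congr rfl fun i _ => key2 a b c d (x i) (z i)

lemma Cmat_one (n : ℕ) : Cmat 1 0 n = 1 := by
  ext x y
  rcases eq_or_ne x y with h | h
  · subst h; simp [Cmat, hammingDist_self]
  · have hd : hammingDist x y ≠ 0 := by simpa [hammingDist_eq_zero] using h
    simp [Cmat, Matrix.one_apply_ne h, zero_pow hd]

lemma Cmat_transpose (a b : ℝ) (n : ℕ) : (Cmat a b n)ᵀ = Cmat a b n := by
  ext x y
  simp [Cmat, hammingDist_comm x y]

lemma Cmat_col_sum (a b : ℝ) (n : ℕ) (y : Fin n → Fin 2) :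
    ∑ x : Fin n → Fin 2, Cmat a b n x y = (a + b) ^ n := by
  simp only [Cmat_apply_prod]
  rw [← Fintype.prod_sum (fun i t => if t = y i then a else b)]
  rw [show (∏ i, ∑ t : Fin 2, if t = y i then a else b) = ∏ _i : Fin n, (a + b) from
    Finset.prod_congr rfl fun i _ => key1 a b (y i)]
  simp

theorem trace_inv_diag_inv (a : ℝ) (ha : a ≠ 1 / 2) (n : ℕ)
    (π : (Fin n → Fin 2) → ℝ) (hπ : ∀ x, 0 ≤ π x) (hsum : ∑ x, π x = 1) :
    Matrix.trace ((CmatB a n)⁻¹ * Matrix.diagonal ((CmatB a n).mulVec π) * ((CmatB a n)⁻¹)ᵀ)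
      = ((a ^ 2 + (1 - a) ^ 2) / (2 * a - 1) ^ 2) ^ n := by
  have hD : (2 * a - 1) ≠ 0 := by
    intro h; apply ha; linarith
  have hinv : (CmatB a n)⁻¹ = Cmat (a / (2 * a - 1)) (-(1 - a) / (2 * a - 1)) n := by
    apply Matrix.inv_eq_right_inv
    rw [CmatB, Cmat_mul]
    have e1 : a * (a / (2 * a - 1)) + (1 - a) * (-(1 - a) / (2 * a - 1)) = 1 := by
      rw [show a * (a / (2 * a - 1)) + (1 - a) * (-(1 - a) / (2 * a - 1))
        = (a * a - (1 - a) * (1 - a)) / (2 * a - 1) by ring, div_eq_one_iff_eq hD]; ring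
    have e2 : a * (-(1 - a) / (2 * a - 1)) + (1 - a) * (a / (2 * a - 1)) = 0 := by
      field_simp; ring
    rw [e1, e2, Cmat_one]
  have hv : ∑ x, (CmatB a n).mulVec π x = 1 := by
    simp only [Matrix.mulVec, dotProduct]
    rw [Finset.sum_comm]
    calc ∑ y, ∑ x, CmatB a n x y * π y
        = ∑ y : Fin n → Fin 2, (a + (1 - a)) ^ n * π y := by
          refine Finset.sum_congr rfl fun y _ => ?_
          rw [← Finset.sum_mul, CmatB, Cmat_col_sum]
      _ = 1 := by simpa using hsum
  rw [hinv, Cmat_transpose, Matrix.trace_mul_cycle, Cmat_mul]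
  set E := a / (2 * a - 1) * (a / (2 * a - 1)) +
    -(1 - a) / (2 * a - 1) * (-(1 - a) / (2 * a - 1)) with hE
  have htr : Matrix.trace
      (Cmat E (a / (2 * a - 1) * (-(1 - a) / (2 * a - 1)) +
        -(1 - a) / (2 * a - 1) * (a / (2 * a - 1))) n *
        Matrix.diagonal ((CmatB a n).mulVec π)) = ∑ x, E ^ n * (CmatB a n).mulVec π x := by
    simp [Matrix.trace, Matrix.diag, Matrix.mul_diagonal, Cmat, hammingDist_self]
  rw [htr, ← Finset.mul_sum, hv, mul_one]
  congr 1
  rw [hE]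
  field_simp
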